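/- Let G be a finite set and C a set, and take S = S* = {δ : G → C | for every g ∈ G there is h ≠ g with δ h = δ g}. Then S* is solvable: for every δ ∈ S* and every g ∈ G there exists n ∈ ℕ with g ∈ K_n(δ); that is, under iterated ringing of the bell within the restriction to worlds without unique colours, every gnome eventually knows the colour of its own hat. -/

import Mathlib

/-- Worlds `δ, δ'` are `g`-similar: they agree on all agents other than `g`. -/
def gSim {G C : Type*} (g : G) (δ δ' : G → C) : Prop := ∀ h, h ≠ g → δ h = δ' h

/-- The iterated bell dynamics: `bellSim S n g δ δ'` is the stage-`n` indistinguishability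
relation `δ ~_g^n δ'` on `S`. At stage `n+1` the relation is refined by the exact set of
knowers (the fine bell dynamics). -/
def bellSim {G C : Type*} (S : Set (G → C)) : ℕ → G → (G → C) → (G → C) → Prop
  | 0 => fun g δ δ' => δ ∈ S ∧ δ' ∈ S ∧ gSim g δ δ'
  | n + 1 => fun g δ δ' => bellSim S n g δ δ' ∧
      {x | ∀ ε, bellSim S n x δ ε → ε x = δ x} =
        {x | ∀ ε, bellSim S n x δ' ε → ε x = δ' x}

/-- The knower set `K_n(δ)`: agents who know their own colour at `δ` at stage `n`. -/
def knows {G C : Type*} (S : Set (G → C)) (n : ℕ) (δ : G → C) : Set G :=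
  {g | ∀ δ', bellSim S n g δ δ' → δ' g = δ g}

/-- `S` is invariant under permutations of the colours. -/
def permInv {G C : Type*} (S : Set (G → C)) : Prop :=
  ∀ ι : C ≃ C, ∀ δ ∈ S, (⇑ι ∘ δ) ∈ S

/-- `S` is solvable: every agent eventually knows its colour at every world of `S`. -/
def solvable {G C : Type*} (S : Set (G → C)) : Prop :=
  ∀ δ ∈ S, ∀ g : G, ∃ n : ℕ, g ∈ knows S n δ

/-- `S*`: the worlds without unique colours (every worn colour is worn at least twice). -/
def Sstar (G C : Type*) : Set (G → C) := {δ | ∀ g, ∃ h, h ≠ g ∧ δ h = δ g}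

section Aux

variable {G C : Type*}

theorem bellSim_iff (S : Set (G → C)) (n : ℕ) (g : G) (δ δ' : G → C) :
    bellSim S n g δ δ' ↔
      δ ∈ S ∧ δ' ∈ S ∧ gSim g δ δ' ∧ ∀ m < n, knows S m δ = knows S m δ' := by
  induction n with
  | zero => simp [bellSim]
  | succ n ih =>
    show bellSim S n g δ δ' ∧ knows S n δ = knows S n δ' ↔ _
    rw [ih]
    constructor
    · rintro ⟨⟨h1, h2, h3, h4⟩, h5⟩
      refine ⟨h1, h2, h3, fun m hm => ?_⟩
      rcases Nat.lt_succ_iff_lt_or_eq.1 hm with h | h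
      · exact h4 m h
      · subst h; exact h5
    · rintro ⟨h1, h2, h3, h4⟩
      exact ⟨⟨h1, h2, h3, fun m hm => h4 m (hm.trans (Nat.lt_succ_self n))⟩,
        h4 n (Nat.lt_succ_self n)⟩

theorem sstar_comp (σ : Equiv.Perm G) {δ : G → C} (hδ : δ ∈ Sstar G C) :
    (δ ∘ σ) ∈ Sstar G C := by
  intro g
  obtain ⟨h, hne, hh⟩ := hδ (σ g)
  exact ⟨σ.symm h, fun he => hne (by simpa using congrArg σ he ▸ (by simp)), by simpa using hh⟩

theorem gSim_comp (σ : Equiv.Perm G) (g : G) (δ δ' : G → C) :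
    gSim g (δ ∘ σ) (δ' ∘ σ) ↔ gSim (σ g) δ δ' := by
  constructor
  · intro hs k hk
    have := hs (σ.symm k) (fun he => hk (by rw [← he]; simp))
    simpa using this
  · intro hs k hk
    exact hs (σ k) (fun he => hk (σ.injective (by simpa using he)))

/-- Equivariance of knowledge under permutations of the agents. -/
theorem knows_comp : ∀ n : ℕ, ∀ σ : Equiv.Perm G, ∀ δ : G → C, ∀ g : G,
    g ∈ knows (Sstar G C) n (δ ∘ σ) ↔ σ g ∈ knows (Sstar G C) n δ := by
  intro n
  induction n using Nat.strong_induction_on with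
  | _ n IH =>
    -- knower sets transform by preimage, at every stage m < n
    have hk : ∀ m < n, ∀ σ : Equiv.Perm G, ∀ δ : G → C,
        knows (Sstar G C) m (δ ∘ σ) = ⇑σ ⁻¹' knows (Sstar G C) m δ := by
      intro m hm σ δ
      ext x
      exact IH m hm σ δ x
    -- bellSim equivariance at stage n
    have hb : ∀ σ : Equiv.Perm G, ∀ (g : G) (δ δ' : G → C),
        bellSim (Sstar G C) n g (δ ∘ σ) (δ' ∘ σ) ↔ bellSim (Sstar G C) n (σ g) δ δ' := by
      intro σ g δ δ'
      rw [bellSim_iff, bellSim_iff, gSim_comp]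
      constructor
      · rintro ⟨h1, h2, h3, h4⟩
        refine ⟨?_, ?_, h3, fun m hm => ?_⟩
        · have := sstar_comp σ.symm h1
          have e : (δ ∘ ⇑σ) ∘ ⇑σ.symm = δ := by funext x; simp
          rwa [e] at this
        · have := sstar_comp σ.symm h2
          have e : (δ' ∘ ⇑σ) ∘ ⇑σ.symm = δ' := by funext x; simp
          rwa [e] at this
        · have := h4 m hm
          rw [hk m hm σ δ, hk m hm σ δ'] at this
          ext x
          have := congrArg (fun s => σ.symm x ∈ s) this
          simpa using this
      · rintro ⟨h1, h2, h3, h4⟩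
        refine ⟨sstar_comp σ h1, sstar_comp σ h2, h3, fun m hm => ?_⟩
        rw [hk m hm σ δ, hk m hm σ δ', h4 m hm]
    intro σ δ g
    constructor
    · intro hg ε hε
      have := hg (ε ∘ σ) ((hb σ g δ ε).2 hε)
      simpa using this
    · intro hg ε hε
      have h1 : bellSim (Sstar G C) n (σ g) δ (ε ∘ σ.symm) := by
        have : (ε ∘ ⇑σ.symm) ∘ ⇑σ = ε := by funext x; simp
        rw [← hb σ g δ (ε ∘ σ.symm), this]
        exact hε
      have := hg (ε ∘ σ.symm) h1
      simpa using this

/-- Classmates know their colours simultaneously. -/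
theorem knows_of_classmate {δ : G → C} {g h : G} (hgh : δ h = δ g) {n : ℕ}
    (hg : h ∈ knows (Sstar G C) n δ) : g ∈ knows (Sstar G C) n δ := by
  classical
  have hσ : δ ∘ (Equiv.swap g h) = δ := by
    funext x
    rcases eq_or_ne x g with rfl | hxg
    · simp [Equiv.swap_apply_left, hgh]
    rcases eq_or_ne x h with rfl | hxh
    · simp [Equiv.swap_apply_right, hgh]
    · simp [Equiv.swap_apply_of_ne_of_ne hxg hxh]
  have := knows_comp n (Equiv.swap g h) δ g
  rw [hσ, Equiv.swap_apply_left] at this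
  exact this.2 hg

theorem two_le_class_ncard [Finite G] {δ : G → C} (hδ : δ ∈ Sstar G C) (g : G) :
    2 ≤ ({x | δ x = δ g}).ncard := by
  obtain ⟨h, hne, hh⟩ := hδ g
  have : 1 < ({x | δ x = δ g}).ncard := by
    rw [Set.one_lt_ncard_iff (Set.toFinite _)]
    exact ⟨h, g, hh, rfl, hne⟩
  omega

end Aux

theorem main_lemma {G C : Type*} [Fintype G] :
    ∀ s : ℕ, ∀ δ ∈ Sstar G C, ∀ g : G,
      ({x | δ x = δ g}).ncard ≤ s → ∃ n, g ∈ knows (Sstar G C) n δ := by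
  intro s
  induction s using Nat.strong_induction_on with
  | _ s IH =>
    intro δ hδ g hcard
    classical
    by_cases hA : ∃ c, c ≠ δ g ∧ Function.update δ g c ∈ Sstar G C ∧
        ∀ m, knows (Sstar G C) m δ = knows (Sstar G C) m (Function.update δ g c)
    · -- there is an alternative world indistinguishable forever: use the classmate
      obtain ⟨c, hc, hcS, hceq⟩ := hA
      obtain ⟨h, hne, hh⟩ := hδ g
      have hclass : {x | Function.update δ g c x = Function.update δ g c h}
          = {x | δ x = δ g} \ {g} := by
        ext x
        rcases eq_or_ne x g with rfl | hx
        · simp only [Function.update_self, Function.update_of_ne hne, hh,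
            Set.mem_setOf_eq, Set.mem_diff, Set.mem_singleton_iff]
          exact iff_of_false hc (by tauto)
        · simp only [Function.update_of_ne hx, Function.update_of_ne hne, hh,
            Set.mem_setOf_eq, Set.mem_diff, Set.mem_singleton_iff]
          tauto
      have h2 : 2 ≤ ({x | δ x = δ g}).ncard := two_le_class_ncard hδ g
      have hlt : ({x | Function.update δ g c x = Function.update δ g c h}).ncard ≤ s - 1 := by
        rw [hclass, Set.ncard_diff_singleton_of_mem (show g ∈ {x | δ x = δ g} from rfl)]
        omega
      obtain ⟨m, hm⟩ := IH (s-1) (by omega) (Function.update δ g c) hcS h hlt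
      rw [← hceq m] at hm
      exact ⟨m, knows_of_classmate hh hm⟩
    · -- every alternative world is eventually distinguished: take the max stage
      push_neg at hA
      have hchoice : ∀ h : G, ∃ m,
          (δ h ≠ δ g ∧ Function.update δ g (δ h) ∈ Sstar G C) →
            knows (Sstar G C) m δ ≠ knows (Sstar G C) m (Function.update δ g (δ h)) := by
        intro h
        by_cases hcond : δ h ≠ δ g ∧ Function.update δ g (δ h) ∈ Sstar G C
        · obtain ⟨m, hm⟩ := hA (δ h) hcond.1 hcond.2
          exact ⟨m, fun _ => hm⟩
        · exact ⟨0, fun hcon => absurd hcon hcond⟩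
      choose f hf using hchoice
      refine ⟨Finset.univ.sup f + 1, ?_⟩
      intro δ' hbell
      rw [bellSim_iff] at hbell
      obtain ⟨_, hδ', hsim, heq⟩ := hbell
      by_contra hne
      obtain ⟨h, hhg, hh⟩ := hδ' g
      have hδh : δ' h = δ h := (hsim h hhg).symm
      have hg' : δ' g = δ h := hh.symm.trans hδh
      have hupd : δ' = Function.update δ g (δ h) := by
        funext x
        rcases eq_or_ne x g with rfl | hx
        · rw [Function.update_self]; exact hg'
        · rw [Function.update_of_ne hx]; exact (hsim x hx).symm
      have hc1 : δ h ≠ δ g := fun e => hne (hg'.trans e)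
      have hd := hf h ⟨hc1, hupd ▸ hδ'⟩
      rw [← hupd] at hd
      exact hd (heq (f h) (Nat.lt_succ_of_le (Finset.le_sup (Finset.mem_univ h))))

/-- `S*` is solvable: under iterated ringing of the bell within the restriction to worlds
without unique colours, every gnome eventually knows the colour of its own hat. -/
theorem stmt_4 {G C : Type*} [Fintype G] : solvable (Sstar G C) := by
  intro δ hδ g
  refine main_lemma (Fintype.card G) δ hδ g ?_
  have := Set.ncard_le_ncard (Set.subset_univ {x | δ x = δ g}) Set.finite_univ
  simpa [Set.ncard_univ, Nat.card_eq_fintype_card] using this
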